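/- arXiv:2402.10339 — 6 statements merged into one kernel-verified Lean document; each statement's English description precedes it below -/
import Mathlib

section
/- A twice continuously differentiable function f : ℝ^d → ℝ has all diagonal Hessian entries identically zero (∂²f/∂x_i² ≡ 0 for all i) if and only if f can be written as a multilinear polynomial f(x) = ∑_{S ⊆ {1,…,d}} w_S ∏_{i ∈ S} x_i for some real coefficients w_S. -/
open Finset Function

/-- The iterated finite-difference operator of `f` over the coordinates in `S`,
based at `y`. -/
noncomputable def Dop {d : ℕ} (f : (Fin d → ℝ) → ℝ) (S : Finset (Fin d)) (y : Fin d → ℝ) : ℝ :=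
  ∑ T ∈ S.powerset, (-1:ℝ)^(S.card - T.card) * f (fun j => if j ∈ T then 1 else y j)

lemma Dop_insert {d : ℕ} (f : (Fin d → ℝ) → ℝ) {S : Finset (Fin d)} {i : Fin d}
    (hiS : i ∉ S) (z : Fin d → ℝ) :
    Dop f (insert i S) z = Dop f S (update z i 1) - Dop f S z := by
  unfold Dop
  rw [Finset.sum_powerset_insert hiS]
  have h1 : ∑ T ∈ S.powerset, (-1:ℝ)^((insert i S).card - T.card) *
      f (fun j => if j ∈ T then 1 else z j)
      = -∑ T ∈ S.powerset, (-1:ℝ)^(S.card - T.card) * f (fun j => if j ∈ T then 1 else z j) := by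
    rw [← Finset.sum_neg_distrib]
    apply Finset.sum_congr rfl
    intro T hT
    have hTS : T ⊆ S := Finset.mem_powerset.mp hT
    have hcle : T.card ≤ S.card := Finset.card_le_card hTS
    have hc : (insert i S).card - T.card = (S.card - T.card) + 1 := by
      rw [Finset.card_insert_of_notMem hiS]; omega
    rw [hc, pow_succ]; ring
  have h2 : ∑ T ∈ S.powerset, (-1:ℝ)^((insert i S).card - (insert i T).card) *
      f (fun j => if j ∈ insert i T then 1 else z j)
      = ∑ T ∈ S.powerset, (-1:ℝ)^(S.card - T.card) *
      f (fun j => if j ∈ T then 1 else update z i 1 j) := by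
    apply Finset.sum_congr rfl
    intro T hT
    have hTS : T ⊆ S := Finset.mem_powerset.mp hT
    have hiT : i ∉ T := fun h => hiS (hTS h)
    have hc : (insert i S).card - (insert i T).card = S.card - T.card := by
      rw [Finset.card_insert_of_notMem hiS, Finset.card_insert_of_notMem hiT]; omega
    rw [hc]
    congr 1
    congr 1
    funext j
    by_cases hj : j = i
    · subst hj; simp [hiT]
    · simp [Finset.mem_insert, hj, update_of_ne hj]
  rw [h1, h2]; ring

lemma Dop_affine {d : ℕ} (f : (Fin d → ℝ) → ℝ)
    (aff : ∀ (i : Fin d) (x : Fin d → ℝ) (t : ℝ),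
      f (update x i t) = f (update x i 0) + t * (f (update x i 1) - f (update x i 0)))
    {S : Finset (Fin d)} {i : Fin d} (hiS : i ∉ S) (y : Fin d → ℝ) (t : ℝ) :
    Dop f S (update y i t) = Dop f S (update y i 0)
      + t * (Dop f S (update y i 1) - Dop f S (update y i 0)) := by
  have key : ∀ t' : ℝ, Dop f S (update y i t') =
      ∑ T ∈ S.powerset, (-1:ℝ)^(S.card - T.card) *
        f (update (fun j => if j ∈ T then 1 else y j) i t') := by
    intro t'
    unfold Dop
    apply Finset.sum_congr rfl
    intro T hT
    have hiT : i ∉ T := fun h => hiS (Finset.mem_powerset.mp hT h)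
    congr 1
    congr 1
    funext j
    by_cases hj : j = i
    · subst hj; simp [hiT]
    · simp [hj, update_of_ne hj]
  rw [key t, key 0, key 1]
  have step : ∑ T ∈ S.powerset, (-1:ℝ)^(S.card - T.card) *
        f (update (fun j => if j ∈ T then 1 else y j) i t)
      = ∑ T ∈ S.powerset, (((-1:ℝ)^(S.card - T.card) *
          f (update (fun j => if j ∈ T then 1 else y j) i 0))
        + t * (((-1:ℝ)^(S.card - T.card) *
          f (update (fun j => if j ∈ T then 1 else y j) i 1))
          - ((-1:ℝ)^(S.card - T.card) *
          f (update (fun j => if j ∈ T then 1 else y j) i 0)))) := by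
    apply Finset.sum_congr rfl
    intro T _
    rw [aff i (fun j => if j ∈ T then 1 else y j) t]
    ring
  rw [step, Finset.sum_add_distrib, ← Finset.mul_sum, Finset.sum_sub_distrib]

/-- A function affine in each coordinate equals its multilinear expansion over any
finite set of coordinates. -/
lemma rep_of_aff {d : ℕ} (f : (Fin d → ℝ) → ℝ)
    (aff : ∀ (i : Fin d) (x : Fin d → ℝ) (t : ℝ),
      f (update x i t) = f (update x i 0) + t * (f (update x i 1) - f (update x i 0)))
    (A : Finset (Fin d)) :
    ∀ x, f x = ∑ S ∈ A.powerset, (∏ i ∈ S, x i) *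
      Dop f S (fun j => if j ∈ A then 0 else x j) := by
  induction A using Finset.induction_on with
  | empty => intro x; simp [Dop]
  | @insert i A hiA ih =>
    intro x
    rw [ih x]
    have hy : ∀ j, (if j ∈ A then 0 else x j) =
        update (fun j => if j ∈ insert i A then 0 else x j) i (x i) j := by
      intro j
      by_cases hj : j = i
      · subst hj; simp [hiA]
      · simp [update_of_ne hj, Finset.mem_insert, hj]
    set y' : Fin d → ℝ := fun j => if j ∈ insert i A then 0 else x j with hy'
    have hyy : (fun j => if j ∈ A then 0 else x j) = update y' i (x i) := funext hy
    have hy'i : y' i = 0 := by simp [hy']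
    rw [Finset.sum_powerset_insert hiA, ← Finset.sum_add_distrib]
    apply Finset.sum_congr rfl
    intro S hS
    have hiS : i ∉ S := fun h => hiA (Finset.mem_powerset.mp hS h)
    rw [hyy]
    have h0 : update y' i 0 = y' := by rw [← hy'i]; exact update_eq_self i y'
    rw [Dop_affine f aff hiS y' (x i), h0]
    rw [Finset.prod_insert hiS, Dop_insert f hiS y']
    ring

lemma comp_line {E : Type*} [NormedAddCommGroup E] [NormedSpace ℝ E] (g : E → ℝ)
    (hg : Differentiable ℝ g) (x v : E) (t : ℝ) :
    HasDerivAt (fun s : ℝ => g (x + s • v)) (fderiv ℝ g (x + t • v) v) t := by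
  have hline : HasDerivAt (fun s : ℝ => x + s • v) v t := by
    simpa using ((hasDerivAt_id t).smul_const v).const_add x
  exact ((hg (x + t • v)).hasFDerivAt).comp_hasDerivAt t hline

lemma aff_of_hess {d : ℕ} (f : (Fin d → ℝ) → ℝ) (hf : ContDiff ℝ 2 f)
    (h : ∀ i : Fin d, ∀ x : Fin d → ℝ,
        fderiv ℝ (fun y => fderiv ℝ f y (Pi.single i 1)) x (Pi.single i 1) = 0)
    (i : Fin d) (x : Fin d → ℝ) (t : ℝ) :
    f (update x i t) = f (update x i 0) + t * (f (update x i 1) - f (update x i 0)) := by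
  set v : Fin d → ℝ := Pi.single i 1 with hv
  set b : Fin d → ℝ := update x i 0 with hb
  have hdf : Differentiable ℝ f := hf.differentiable (by norm_num)
  have hF : Differentiable ℝ (fun y => fderiv ℝ f y v) := by
    have h1 : ContDiff ℝ 1 (fderiv ℝ f) := hf.fderiv_right (by norm_num)
    exact (h1.differentiable one_ne_zero).clm_apply (differentiable_const v)
  have hbt : ∀ s : ℝ, update x i s = b + s • v := by
    intro s; funext j
    by_cases hj : j = i
    · subst hj; simp [hb, hv]
    · simp [hb, hv, update_of_ne hj, Pi.single_eq_of_ne hj]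
  have hg1 : ∀ s : ℝ, HasDerivAt (fun s : ℝ => fderiv ℝ f (b + s • v) v)
      (fderiv ℝ (fun y => fderiv ℝ f y v) (b + s • v) v) s :=
    fun s => comp_line (fun y => fderiv ℝ f y v) hF b v s
  have hzero : ∀ s : ℝ, deriv (fun s : ℝ => fderiv ℝ f (b + s • v) v) s = 0 := by
    intro s; rw [(hg1 s).deriv]; exact h i _
  have hconst : ∀ s : ℝ, fderiv ℝ f (b + s • v) v = fderiv ℝ f (b + (0:ℝ) • v) v :=
    fun s => is_const_of_deriv_eq_zero (fun u => (hg1 u).differentiableAt) hzero s 0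
  set c : ℝ := fderiv ℝ f (b + (0:ℝ) • v) v with hc
  have hg : ∀ s : ℝ, HasDerivAt (fun s : ℝ => f (b + s • v)) c s := by
    intro s
    have := comp_line f hdf b v s
    rwa [hconst s] at this
  have key : ∀ s : ℝ, f (b + s • v) = f (b + (0:ℝ) • v) + s * c := by
    intro s
    have hd : ∀ u : ℝ, HasDerivAt (fun s : ℝ => f (b + s • v) - s * c) 0 u := by
      intro u
      have h2 := (hg u).sub ((hasDerivAt_id u).mul_const c)
      rw [one_mul, sub_self] at h2
      exact h2
    have := is_const_of_deriv_eq_zero (fun u => (hd u).differentiableAt)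
      (fun u => (hd u).deriv) s 0
    simp only [zero_mul] at this
    linarith
  have h0 : b + (0:ℝ) • v = b := by simp
  rw [hbt t, hbt 1, key t, key 1, h0]
  ring

lemma hess_of_poly {d : ℕ} (f : (Fin d → ℝ) → ℝ) (hf : ContDiff ℝ 2 f)
    (w : Finset (Fin d) → ℝ)
    (hw : ∀ x, f x = ∑ S : Finset (Fin d), w S * ∏ i ∈ S, x i)
    (i : Fin d) (x : Fin d → ℝ) :
    fderiv ℝ (fun y => fderiv ℝ f y (Pi.single i 1)) x (Pi.single i 1) = 0 := by
  set v : Fin d → ℝ := Pi.single i 1 with hv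
  have hdf : Differentiable ℝ f := hf.differentiable (by norm_num)
  have hF : Differentiable ℝ (fun y => fderiv ℝ f y v) := by
    have h1 : ContDiff ℝ 1 (fderiv ℝ f) := hf.fderiv_right (by norm_num)
    exact (h1.differentiable one_ne_zero).clm_apply (differentiable_const v)
  set B : ℝ := ∑ S : Finset (Fin d),
    (if i ∈ S then w S * ∏ j ∈ S.erase i, x j else 0) with hB
  have hcoord : ∀ (t : ℝ) (j : Fin d), (x + t • v) j = if j = i then x i + t else x j := by
    intro t j
    by_cases hj : j = i
    · subst hj; simp [hv]
    · simp [hv, Pi.single_eq_of_ne hj, hj]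
  have hfun : ∀ t : ℝ, f (x + t • v) = ∑ S : Finset (Fin d),
      (if i ∈ S then w S * ((x i + t) * ∏ j ∈ S.erase i, x j) else w S * ∏ j ∈ S, x j) := by
    intro t
    rw [hw]
    apply Finset.sum_congr rfl
    intro S _
    by_cases hiS : i ∈ S
    · simp only [hiS, if_true]
      have e1 : (x + t • v) i = x i + t := by rw [hcoord t i]; simp
      have e2 : ∏ j ∈ S.erase i, (x + t • v) j = ∏ j ∈ S.erase i, x j := by
        apply Finset.prod_congr rfl
        intro j hj
        rw [hcoord t j, if_neg (Finset.ne_of_mem_erase hj)]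
      rw [← Finset.mul_prod_erase S _ hiS, e1, e2]
    · simp only [hiS, if_false]
      congr 1
      apply Finset.prod_congr rfl
      intro j hj
      rw [hcoord t j, if_neg (show j ≠ i from fun h => hiS (h ▸ hj))]
  have hgB : ∀ t : ℝ, HasDerivAt (fun t : ℝ => f (x + t • v)) B t := by
    intro t
    have hsum : HasDerivAt (fun t : ℝ => ∑ S : Finset (Fin d),
        (if i ∈ S then w S * ((x i + t) * ∏ j ∈ S.erase i, x j) else w S * ∏ j ∈ S, x j)) B t := by
      rw [hB]
      apply HasDerivAt.fun_sum
      intro S _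
      by_cases hiS : i ∈ S
      · simp only [hiS, if_true]
        have h1 : HasDerivAt (fun t : ℝ => x i + t) 1 t := (hasDerivAt_id t).const_add (x i)
        simpa using (h1.mul_const (∏ j ∈ S.erase i, x j)).const_mul (w S)
      · simp only [hiS, if_false]
        exact hasDerivAt_const t _
    have heq : (fun t : ℝ => ∑ S : Finset (Fin d),
        (if i ∈ S then w S * ((x i + t) * ∏ j ∈ S.erase i, x j) else w S * ∏ j ∈ S, x j))
        = fun t : ℝ => f (x + t • v) := funext fun t => (hfun t).symm
    rwa [heq] at hsum
  have hg1 : ∀ t : ℝ, fderiv ℝ f (x + t • v) v = B :=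
    fun t => (comp_line f hdf x v t).unique (hgB t)
  have hconst : (fun t : ℝ => fderiv ℝ f (x + t • v) v) = fun _ => B := funext hg1
  have h0 : HasDerivAt (fun t : ℝ => fderiv ℝ f (x + t • v) v) 0 0 := by
    rw [hconst]; exact hasDerivAt_const _ _
  have h1 := comp_line (fun y => fderiv ℝ f y v) hF x v 0
  have := h1.unique h0
  rw [show x + (0:ℝ) • v = x by simp] at this
  exact this

/-- A twice continuously differentiable `f : ℝ^d → ℝ` has all diagonal Hessian entries
identically zero iff it is a multilinear polynomial `∑_{S ⊆ {1,…,d}} w_S ∏_{i∈S} x_i`. -/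
theorem diag_hessian_zero_iff_multilinear (d : ℕ) (f : (Fin d → ℝ) → ℝ)
    (hf : ContDiff ℝ 2 f) :
    (∀ i : Fin d, ∀ x : Fin d → ℝ,
        fderiv ℝ (fun y => fderiv ℝ f y (Pi.single i 1)) x (Pi.single i 1) = 0)
      ↔ ∃ w : Finset (Fin d) → ℝ, ∀ x, f x = ∑ S : Finset (Fin d), w S * ∏ i ∈ S, x i := by
  constructor
  · intro h
    refine ⟨fun S => Dop f S (fun _ => 0), fun x => ?_⟩
    have hrep := rep_of_aff f (aff_of_hess f hf h) Finset.univ x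
    have hz : (fun j => if j ∈ (Finset.univ : Finset (Fin d)) then (0:ℝ) else x j)
        = fun _ => (0:ℝ) := by funext j; simp
    rw [hrep, hz, Finset.powerset_univ]
    apply Finset.sum_congr rfl
    intro S _
    rw [mul_comm]
  · intro ⟨w, hw⟩ i x
    exact hess_of_poly f hf w hw i x
end

section
/- The LOORF estimator is unbiased: if z^(1),…,z^(n) are i.i.d. from p_θ (a positive differentiable distribution on a finite set, n ≥ 2), then E[(1/(n−1)) ∑_{s=1}^n (J(z^(s)) − (1/n)∑_{s'=1}^n J(z^(s'))) ∇_θ log p_θ(z^(s))] = ∇_θ E_{z~p_θ}[J(z)]. -/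
open Finset

lemma exp_one {Z : Type*} [Fintype Z] {n : ℕ} (p h : Z → ℝ) (hp : ∑ z, p z = 1)
    (s₀ : Fin n) :
    ∑ f : Fin n → Z, (∏ s, p (f s)) * h (f s₀) = ∑ z, p z * h z := by
  classical
  have key : ∀ f : Fin n → Z, (∏ s, p (f s)) * h (f s₀)
      = ∏ s, (if s = s₀ then p (f s) * h (f s) else p (f s)) := by
    intro f
    rw [← Finset.mul_prod_erase univ (fun s => if s = s₀ then p (f s) * h (f s) else p (f s))
      (mem_univ s₀), ← Finset.mul_prod_erase univ (fun s => p (f s)) (mem_univ s₀)]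
    simp only [eq_self_iff_true, if_true]
    rw [Finset.prod_congr rfl
      (fun s hs => by simp [Finset.ne_of_mem_erase hs] :
        ∀ s ∈ univ.erase s₀, (if s = s₀ then p (f s) * h (f s) else p (f s)) = p (f s))]
    ring
  simp_rw [key]
  have := Finset.prod_univ_sum (fun _ : Fin n => (univ : Finset Z))
    (fun s z => if s = s₀ then p z * h z else p z)
  rw [Fintype.piFinset_univ] at this
  rw [← this, ← Finset.mul_prod_erase univ _ (mem_univ s₀)]
  simp only [eq_self_iff_true, if_true]
  rw [Finset.prod_congr rfl
      (fun s hs => by simp [Finset.ne_of_mem_erase hs, hp] :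
        ∀ s ∈ univ.erase s₀, (∑ z, if s = s₀ then p z * h z else p z) = 1)]
  simp

lemma exp_two {Z : Type*} [Fintype Z] {n : ℕ} (p h₁ h₂ : Z → ℝ) (hp : ∑ z, p z = 1)
    (s₀ s₁ : Fin n) (hne : s₀ ≠ s₁) :
    ∑ f : Fin n → Z, (∏ s, p (f s)) * (h₁ (f s₀) * h₂ (f s₁))
      = (∑ z, p z * h₁ z) * (∑ z, p z * h₂ z) := by
  classical
  set q : Fin n → Z → ℝ := fun s z =>
    if s = s₀ then p z * h₁ z else if s = s₁ then p z * h₂ z else p z with hq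
  have hmem : s₁ ∈ univ.erase s₀ := by simp [hne.symm]
  have key : ∀ f : Fin n → Z, (∏ s, p (f s)) * (h₁ (f s₀) * h₂ (f s₁))
      = ∏ s, q s (f s) := by
    intro f
    rw [← Finset.mul_prod_erase univ (fun s => q s (f s)) (mem_univ s₀),
      ← Finset.mul_prod_erase _ (fun s => q s (f s)) hmem,
      ← Finset.mul_prod_erase univ (fun s => p (f s)) (mem_univ s₀),
      ← Finset.mul_prod_erase _ (fun s => p (f s)) hmem]
    have e1 : q s₀ (f s₀) = p (f s₀) * h₁ (f s₀) := by simp [hq]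
    have e2 : q s₁ (f s₁) = p (f s₁) * h₂ (f s₁) := by simp [hq, hne.symm]
    rw [e1, e2, Finset.prod_congr rfl
      (fun s hs => by
        have h1 : s ≠ s₀ := Finset.ne_of_mem_erase (Finset.mem_of_mem_erase hs)
        have h2 : s ≠ s₁ := Finset.ne_of_mem_erase hs
        simp [hq, h1, h2] :
        ∀ s ∈ (univ.erase s₀).erase s₁, q s (f s) = p (f s))]
    ring
  simp_rw [key]
  have := Finset.prod_univ_sum (fun _ : Fin n => (univ : Finset Z)) q
  rw [Fintype.piFinset_univ] at this
  rw [← this, ← Finset.mul_prod_erase univ _ (mem_univ s₀),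
    ← Finset.mul_prod_erase _ _ hmem]
  have e1 : (∑ z, q s₀ z) = ∑ z, p z * h₁ z := by simp [hq]
  have e2 : (∑ z, q s₁ z) = ∑ z, p z * h₂ z := by simp [hq, hne.symm]
  rw [e1, e2, Finset.prod_congr rfl
      (fun s hs => by
        have h1 : s ≠ s₀ := Finset.ne_of_mem_erase (Finset.mem_of_mem_erase hs)
        have h2 : s ≠ s₁ := Finset.ne_of_mem_erase hs
        simp [hq, h1, h2, hp] :
        ∀ s ∈ (univ.erase s₀).erase s₁, (∑ z, q s z) = 1)]
  simp [mul_assoc]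
open Finset

/-- The LOORF estimator is unbiased: for i.i.d. samples from a positive differentiable
distribution on a finite set, its expectation equals the gradient of the expected cost. -/
theorem loorf_unbiased {Z : Type*} [Fintype Z] (p : ℝ → Z → ℝ) (θ : ℝ) (J : Z → ℝ)
    (n : ℕ) (hn : 2 ≤ n)
    (hpos : ∀ t z, 0 < p t z) (hsum : ∀ t, ∑ z, p t z = 1)
    (hdiff : ∀ z, Differentiable ℝ (fun t => p t z)) :
    ∑ f : Fin n → Z, (∏ s, p θ (f s)) *
        ((1 / ((n : ℝ) - 1)) * ∑ s, (J (f s) - (1 / (n : ℝ)) * ∑ s', J (f s')) *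
          deriv (fun t => Real.log (p t (f s))) θ)
      = deriv (fun t => ∑ z, p t z * J z) θ := by
  classical
  set g : Z → ℝ := fun z => deriv (fun t => p t z) θ with hgdef
  set w : Z → ℝ := fun z => g z / p θ z with hwdef
  have hlog : ∀ z, deriv (fun t => Real.log (p t z)) θ = w z := fun z =>
    (((hdiff z θ).hasDerivAt).log (hpos θ z).ne').deriv
  have hrhs : deriv (fun t => ∑ z, p t z * J z) θ = ∑ z, g z * J z :=
    (HasDerivAt.fun_sum (fun z _ => ((hdiff z θ).hasDerivAt).mul_const (J z))).deriv
  have hg0 : ∑ z, g z = 0 := by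
    have h1 : HasDerivAt (fun t => ∑ z, p t z) (∑ z, g z) θ :=
      HasDerivAt.fun_sum (fun z _ => (hdiff z θ).hasDerivAt)
    have h2 : (fun t => ∑ z, p t z) = fun _ => (1 : ℝ) := funext hsum
    rw [h2] at h1
    simpa using h1.deriv.symm
  have hpw : ∀ z, p θ z * w z = g z := fun z => by
    rw [hwdef]; exact mul_div_cancel₀ _ (hpos θ z).ne'
  have hB : ∑ z, p θ z * (w z * J z) = ∑ z, g z * J z :=
    Finset.sum_congr rfl fun z _ => by rw [← mul_assoc, hpw]
  have hC : ∑ z, p θ z * w z = 0 := by simp_rw [hpw]; exact hg0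
  set A : ℝ := ∑ z, g z * J z with hAdef
  have key : ∀ s : Fin n, ∑ f : Fin n → Z, (∏ s'', p θ (f s'')) *
      ((J (f s) - (1 / (n : ℝ)) * ∑ s', J (f s')) * w (f s))
      = (1 - 1 / (n : ℝ)) * A := by
    intro s
    have expand : ∀ f : Fin n → Z, (∏ s'', p θ (f s'')) *
        ((J (f s) - (1 / (n : ℝ)) * ∑ s', J (f s')) * w (f s))
        = (∏ s'', p θ (f s'')) * (w (f s) * J (f s))
          - (1 / (n : ℝ)) * ∑ s', (∏ s'', p θ (f s'')) * (w (f s) * J (f s')) := by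
      intro f
      have : ∑ s', (∏ s'', p θ (f s'')) * (w (f s) * J (f s'))
          = (∏ s'', p θ (f s'')) * (w (f s) * ∑ s', J (f s')) := by
        rw [Finset.mul_sum, Finset.mul_sum]
      rw [this]; ring
    simp_rw [expand]
    rw [Finset.sum_sub_distrib]
    have h1 : ∑ f : Fin n → Z, (∏ s'', p θ (f s'')) * (w (f s) * J (f s))
        = ∑ z, p θ z * (w z * J z) := exp_one (p θ) (fun z => w z * J z) (hsum θ) s
    have h2 : ∑ f : Fin n → Z, ∑ s', (∏ s'', p θ (f s'')) * (w (f s) * J (f s'))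
        = ∑ z, p θ z * (w z * J z) := by
      rw [Finset.sum_comm]
      rw [← Finset.add_sum_erase univ _ (mem_univ s)]
      have hdiag : ∑ f : Fin n → Z, (∏ s'', p θ (f s'')) * (w (f s) * J (f s))
          = ∑ z, p θ z * (w z * J z) := exp_one (p θ) (fun z => w z * J z) (hsum θ) s
      have hoff : ∀ s' ∈ univ.erase s,
          ∑ f : Fin n → Z, (∏ s'', p θ (f s'')) * (w (f s) * J (f s')) = 0 := by
        intro s' hs'
        rw [exp_two (p θ) w J (hsum θ) s s' (Finset.ne_of_mem_erase hs').symm, hC,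
          zero_mul]
      rw [hdiag, Finset.sum_eq_zero hoff, add_zero]
    rw [← Finset.mul_sum, h1, h2, hB]
    ring
  simp_rw [hlog]
  have step : ∀ f : Fin n → Z, (∏ s, p θ (f s)) *
      ((1 / ((n : ℝ) - 1)) * ∑ s, (J (f s) - (1 / (n : ℝ)) * ∑ s', J (f s')) * w (f s))
      = (1 / ((n : ℝ) - 1)) * ∑ s, (∏ s'', p θ (f s'')) *
        ((J (f s) - (1 / (n : ℝ)) * ∑ s', J (f s')) * w (f s)) := by
    intro f
    conv_rhs => rw [← Finset.mul_sum]
    ring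
  simp_rw [step]
  rw [← Finset.mul_sum, Finset.sum_comm]
  simp_rw [key]
  rw [Finset.sum_const, hrhs]
  have hn1 : ((n : ℝ) - 1) ≠ 0 := by
    have : (2 : ℝ) ≤ (n : ℝ) := by exact_mod_cast hn
    linarith
  have hn0 : (n : ℝ) ≠ 0 := by
    have : (2 : ℝ) ≤ (n : ℝ) := by exact_mod_cast hn
    linarith
  simp only [Finset.card_univ, Fintype.card_fin, nsmul_eq_mul]
  field_simp
end

section
/- For the factorized Bernoulli distribution p_θ(z) = ∏_{i=1}^d θ_i^{z_i}(1−θ_i)^{1−z_i} on {0,1}^d with θ_i ∈ (0,1), the optimal constant baseline for coordinate i equals β_i* = E_{z ~ p_θ}[J(z_1,…,z_{i−1}, 1−z_i, z_{i+1},…,z_d)], i.e., the expectation of J with the i-th coordinate flipped. -/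
/-- For the factorized Bernoulli distribution on `{0,1}^d` with parameters `θᵢ ∈ (0,1)`,
the optimal constant baseline for coordinate `i`, i.e. the expectation of `J` under the
distribution tilted by the squared score `q_i(z) ∝ p_θ(z)(∂ log p_θ(z)/∂θ_i)²`, equals the
expectation of `J` with the `i`-th coordinate flipped. -/
theorem bernoulli_optimal_baseline_eq_flip (d : ℕ) (θ : Fin d → ℝ)
    (hθ : ∀ j, θ j ∈ Set.Ioo (0 : ℝ) 1) (i : Fin d) (J : (Fin d → Bool) → ℝ) :
    let P : (Fin d → ℝ) → (Fin d → Bool) → ℝ := fun t z => ∏ j, if z j then t j else 1 - t j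
    let score : (Fin d → Bool) → ℝ :=
      fun z => deriv (fun t => Real.log (P (Function.update θ i t) z)) (θ i)
    (∑ z : Fin d → Bool, P θ z * (score z) ^ 2 * J z)
        / (∑ z : Fin d → Bool, P θ z * (score z) ^ 2)
      = ∑ z : Fin d → Bool, P θ z * J (Function.update z i (!z i)) := by
  classical
  intro P score
  have hP : ∀ (t : Fin d → ℝ) z, P t z = ∏ j, if z j then t j else 1 - t j := fun _ _ => rfl
  obtain ⟨h0, h1⟩ := hθ i
  have h1' : 0 < 1 - θ i := by linarith
  set C : (Fin d → Bool) → ℝ :=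
    fun z => ∏ j ∈ Finset.univ.erase i, (if z j then θ j else 1 - θ j) with hCdef
  have hCpos : ∀ z, 0 < C z := by
    intro z
    refine Finset.prod_pos fun j _ => ?_
    rcases hθ j with ⟨a, b⟩
    cases hz : z j <;> simp <;> linarith
  -- splitting off the i-th factor
  have hPsplit : ∀ (t : ℝ) z, P (Function.update θ i t) z = (if z i then t else 1 - t) * C z := by
    intro t z
    rw [hP, ← Finset.mul_prod_erase _ _ (Finset.mem_univ i)]
    congr 1
    · simp
    · exact Finset.prod_congr rfl fun j hj => by
        rw [Function.update_of_ne (Finset.ne_of_mem_erase hj)]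
  have hPθ : ∀ z, P θ z = (if z i then θ i else 1 - θ i) * C z := by
    intro z
    have := hPsplit (θ i) z
    rwa [Function.update_eq_self] at this
  have hCflip : ∀ z b, C (Function.update z i b) = C z := by
    intro z b
    exact Finset.prod_congr rfl fun j hj => by
      rw [Function.update_of_ne (Finset.ne_of_mem_erase hj)]
  -- compute the score
  have hscore : ∀ z : Fin d → Bool, score z = if z i then (θ i)⁻¹ else -(1 - θ i)⁻¹ := by
    intro z
    show deriv (fun t => Real.log (P (Function.update θ i t) z)) (θ i) = _
    have heq : (fun t => Real.log (P (Function.update θ i t) z))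
        = fun t => Real.log ((if z i then t else 1 - t) * C z) :=
      funext fun t => by rw [hPsplit]
    rw [heq]
    cases hz : z i with
    | true =>
      simp only [if_true]
      have hf : HasDerivAt (fun t : ℝ => t * C z) (1 * C z) (θ i) :=
        (hasDerivAt_id (θ i)).mul_const (C z)
      have hlog := hf.log (by have := hCpos z; positivity)
      rw [hlog.deriv]
      have hCz := (hCpos z).ne'
      field_simp
    | false =>
      simp only [Bool.false_eq_true, if_false]
      have hf : HasDerivAt (fun t : ℝ => (1 - t) * C z) ((0 - 1) * C z) (θ i) :=
        ((hasDerivAt_const (θ i) (1:ℝ)).sub (hasDerivAt_id (θ i))).mul_const (C z)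
      have hlog := hf.log (by have := hCpos z; positivity)
      rw [hlog.deriv]
      have hCz := (hCpos z).ne'
      field_simp
      ring
  -- key identity
  have hkey : ∀ z : Fin d → Bool,
      P θ z * (score z) ^ 2 = (θ i * (1 - θ i))⁻¹ * P θ (Function.update z i (!z i)) := by
    intro z
    rw [hscore, hPθ z, hPθ (Function.update z i (!z i)), hCflip]
    have h0' := h0.ne'
    have h1'' := h1'.ne'
    cases hz : z i <;>
      simp only [hz, Bool.not_true, Bool.not_false, if_true, Bool.false_eq_true, if_false,
        Function.update_self] <;>
      · field_simp
  -- flip is an involution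
  have hinv : Function.Involutive (fun z : Fin d → Bool => Function.update z i (!z i)) := by
    intro z
    funext j
    by_cases h : j = i
    · subst h; simp
    · simp [Function.update_of_ne h]
  have hreindex : ∀ g : (Fin d → Bool) → ℝ,
      ∑ z : Fin d → Bool, g (Function.update z i (!z i)) = ∑ z : Fin d → Bool, g z := by
    intro g
    exact Fintype.sum_equiv hinv.toPerm _ _ fun z => rfl
  -- total mass is 1
  have hsum1 : ∑ z : Fin d → Bool, P θ z = 1 := by
    have this : ∑ z : Fin d → Bool,
        ∏ j, (if z j then θ j else 1 - θ j) = ∏ j, ∑ b : Bool, (if b then θ j else 1 - θ j) :=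
      (Fintype.prod_sum (fun (j : Fin d) (b : Bool) => if b then θ j else 1 - θ j)).symm
    calc ∑ z : Fin d → Bool, P θ z
        = ∑ z : Fin d → Bool, ∏ j, (if z j then θ j else 1 - θ j) := by
          exact Finset.sum_congr rfl fun z _ => hP θ z
      _ = ∏ j, ∑ b : Bool, (if b then θ j else 1 - θ j) := this
      _ = 1 := by simp
  set k : ℝ := (θ i * (1 - θ i))⁻¹ with hk
  have hknz : k ≠ 0 := by positivity
  have hden : ∑ z : Fin d → Bool, P θ z * (score z) ^ 2 = k := by
    calc ∑ z : Fin d → Bool, P θ z * (score z) ^ 2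
        = ∑ z : Fin d → Bool, k * P θ (Function.update z i (!z i)) :=
          Finset.sum_congr rfl fun z _ => hkey z
      _ = k * ∑ z : Fin d → Bool, P θ (Function.update z i (!z i)) := by
          rw [Finset.mul_sum]
      _ = k * ∑ z : Fin d → Bool, P θ z := by rw [hreindex]
      _ = k := by rw [hsum1, mul_one]
  have hnum : ∑ z : Fin d → Bool, P θ z * (score z) ^ 2 * J z
      = k * ∑ z : Fin d → Bool, P θ z * J (Function.update z i (!z i)) := by
    calc ∑ z : Fin d → Bool, P θ z * (score z) ^ 2 * J z
        = ∑ z : Fin d → Bool, k * (P θ (Function.update z i (!z i)) * J z) := by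
          refine Finset.sum_congr rfl fun z _ => ?_
          rw [hkey z]; ring
      _ = k * ∑ z : Fin d → Bool, P θ (Function.update z i (!z i)) * J z := by
          rw [Finset.mul_sum]
      _ = k * ∑ z : Fin d → Bool, P θ z * J (Function.update z i (!z i)) := by
          congr 1
          have := hreindex (fun z => P θ z * J (Function.update z i (!z i)))
          rw [← this]
          exact Finset.sum_congr rfl fun z _ =>
            congrArg (fun w => P θ (Function.update z i (!z i)) * J w) (hinv z).symm
  rw [hnum, hden]
  exact mul_div_cancel_left₀ _ hknz
end

section
/- For the factorized Bernoulli q_i tilted by the squared score, q_i(z) ∝ p_θ(z)·(∂log p_θ(z)/∂θ_i)², the coordinates remain independent with z_j ~ Ber(θ_j) for j ≠ i and z_i ~ Ber(1−θ_i). -/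
open Finset

/-- For the factorized Bernoulli distribution tilted by the squared score of coordinate `i`,
`q_i(z) ∝ p_θ(z)·(∂ log p_θ(z)/∂θ_i)²`, the coordinates remain independent with
`z_j ~ Ber(θ_j)` for `j ≠ i` and `z_i ~ Ber(1 − θ_i)`. -/
theorem tilted_bernoulli_flips_marginal (d : ℕ) (θ : Fin d → ℝ)
    (hθ : ∀ j, θ j ∈ Set.Ioo (0 : ℝ) 1) (i : Fin d) :
    let P : (Fin d → ℝ) → (Fin d → Bool) → ℝ := fun t z => ∏ j, if z j then t j else 1 - t j
    let score : (Fin d → Bool) → ℝ :=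
      fun z => deriv (fun t => Real.log (P (Function.update θ i t) z)) (θ i)
    ∀ z : Fin d → Bool,
      P θ z * (score z) ^ 2 / (∑ z' : Fin d → Bool, P θ z' * (score z') ^ 2)
        = ∏ j, if j = i then (if z j then 1 - θ j else θ j)
               else (if z j then θ j else 1 - θ j) := by
  intro P score z
  obtain ⟨h0i, h1i⟩ := hθ i
  set w : Fin d → Bool → ℝ := fun j b =>
    if j = i then (if b then (θ j)⁻¹ else (1 - θ j)⁻¹)
    else (if b then θ j else 1 - θ j) with hw
  have hCpos : ∀ z' : Fin d → Bool,
      (0:ℝ) < ∏ j ∈ univ.erase i, (if z' j then θ j else 1 - θ j) := by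
    intro z'
    refine prod_pos fun j _ => ?_
    obtain ⟨h0, h1⟩ := hθ j
    split <;> linarith
  have hscore : ∀ z' : Fin d → Bool,
      score z' = if z' i then (θ i)⁻¹ else -(1 - θ i)⁻¹ := by
    intro z'
    obtain ⟨C, hCp, hP⟩ : ∃ C : ℝ, 0 < C ∧
        ∀ t, P (Function.update θ i t) z' = (if z' i then t else 1 - t) * C := by
      refine ⟨_, hCpos z', fun t => ?_⟩
      show (∏ j, if z' j then Function.update θ i t j else 1 - Function.update θ i t j) = _
      rw [← Finset.mul_prod_erase univ _ (mem_univ i)]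
      congr 1
      · simp [Function.update_self]
      · exact Finset.prod_congr rfl fun j hj => by
          simp [Function.update_of_ne (Finset.ne_of_mem_erase hj)]
    show deriv (fun t => Real.log (P (Function.update θ i t) z')) (θ i) = _
    simp only [hP]
    cases h : z' i
    · simp only [Bool.false_eq_true, if_false]
      have hd : HasDerivAt (fun t : ℝ => Real.log ((1 - t) * C))
          (-C / ((1 - θ i) * C)) (θ i) := by
        have h1 : HasDerivAt (fun t : ℝ => (1 - t) * C) (-C) (θ i) := by
          have := ((hasDerivAt_const (θ i) (1:ℝ)).sub (hasDerivAt_id (θ i))).mul_const C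
          simpa using this
        have h2 := h1.log (mul_ne_zero (by linarith) hCp.ne')
        simpa using h2
      rw [hd.deriv]
      have h2 : (1:ℝ) - θ i ≠ 0 := sub_ne_zero_of_ne (ne_of_gt h1i)
      field_simp [hCp.ne']
    · simp only [if_true]
      have hd : HasDerivAt (fun t : ℝ => Real.log (t * C)) (C / (θ i * C)) (θ i) := by
        have h1 : HasDerivAt (fun t : ℝ => t * C) C (θ i) := by
          simpa using (hasDerivAt_id (θ i)).mul_const C
        exact h1.log (mul_ne_zero (by linarith) hCp.ne')
      rw [hd.deriv]
      field_simp [hCp.ne']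
  have hθine : θ i ≠ 0 := ne_of_gt h0i
  have h1θine : (1 : ℝ) - θ i ≠ 0 := by linarith
  have hN : ∀ z' : Fin d → Bool, P θ z' * (score z') ^ 2 = ∏ j, w j (z' j) := by
    intro z'
    rw [hscore z']
    show (∏ j, if z' j then θ j else 1 - θ j) * _ = _
    rw [← Finset.mul_prod_erase univ (fun j => if z' j then θ j else 1 - θ j) (mem_univ i),
        ← Finset.mul_prod_erase univ (fun j => w j (z' j)) (mem_univ i)]
    have herase : ∏ j ∈ univ.erase i, (if z' j then θ j else 1 - θ j)
        = ∏ j ∈ univ.erase i, w j (z' j) :=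
      Finset.prod_congr rfl fun j hj => by simp [hw, Finset.ne_of_mem_erase hj]
    rw [← herase, mul_right_comm]
    congr 1
    cases h : z' i <;> simp [hw, h] <;> field_simp <;> ring
  have hsum : ∑ z' : Fin d → Bool, ∏ j, w j (z' j) = (θ i)⁻¹ + (1 - θ i)⁻¹ := by
    have hps := Finset.prod_univ_sum (fun _ : Fin d => (univ : Finset Bool)) (fun j b => w j b)
    rw [Fintype.piFinset_univ] at hps
    rw [← hps]
    have hone : ∀ j, ∑ b : Bool, w j b = if j = i then (θ i)⁻¹ + (1 - θ i)⁻¹ else 1 := by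
      intro j
      by_cases hj : j = i
      · subst hj; simp [hw, add_comm]
      · obtain ⟨h0, h1⟩ := hθ j
        simp [hw, hj]
    rw [Finset.prod_congr rfl fun j _ => hone j]
    simp
  have hSpos : (0:ℝ) < (θ i)⁻¹ + (1 - θ i)⁻¹ := by
    have a : (0:ℝ) < (θ i)⁻¹ := inv_pos.mpr h0i
    have b : (0:ℝ) < (1 - θ i)⁻¹ := inv_pos.mpr (by linarith)
    linarith
  rw [hN z, Finset.sum_congr rfl (fun z' _ => hN z'), hsum,
      ← Finset.mul_prod_erase univ (fun j => w j (z j)) (mem_univ i),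
      ← Finset.mul_prod_erase univ (fun j => if j = i then (if z j then 1 - θ j else θ j)
               else (if z j then θ j else 1 - θ j)) (mem_univ i)]
  have herase : ∏ j ∈ univ.erase i, w j (z j)
      = ∏ j ∈ univ.erase i, (if j = i then (if z j then 1 - θ j else θ j)
               else (if z j then θ j else 1 - θ j)) :=
    Finset.prod_congr rfl fun j hj => by simp [hw, Finset.ne_of_mem_erase hj]
  rw [herase, div_eq_iff (ne_of_gt hSpos)]
  have hkey : w i (z i) = (if z i then 1 - θ i else θ i) * ((θ i)⁻¹ + (1 - θ i)⁻¹) := by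
    cases h : z i <;> simp [hw, h] <;> field_simp <;> ring
  rw [hkey]
  simp only [if_pos rfl, if_true]
  ring
end

section
/- Unwanted generalization bound: Fix z* ∈ {0,1}^d and define J(z) = m if z = z* and J(z) = M₀ − d_H(z,z*)·ΔM/d otherwise, with ΔM > 0 and m < M₀ − ΔM. Let p_θ be factorized Bernoulli with all θ_i ∈ (0,1). Then for any coordinate i with ∏_{j≠i} p_{θ_j}(z_j*) ≠ 0, the i-th coordinate of −∇_θ E_{z~p_θ}[J(z)] has the same sign (nonnegative product) as the i-th coordinate of ∇_θ p_θ(z*) if and only if m ≤ M₀ − ΔM / (d · ∏_{j≠i} p_{θ_j}(z_j*)). -/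
/-- Unwanted generalization bound: for `J(z*) = m` and `J(z) = M₀ − d_H(z,z*)·ΔM/d`
otherwise, with `ΔM > 0`, `m < M₀ − ΔM` and factorized Bernoulli `p_θ`, the `i`-th
coordinate of `−∇_θ E[J]` aligns (nonnegative product) with the `i`-th coordinate of
`∇_θ p_θ(z*)` iff `m ≤ M₀ − ΔM / (d · ∏_{j≠i} p_{θ_j}(z*_j))`. -/
theorem unwanted_generalization (d : ℕ) (hd : 0 < d) (zstar : Fin d → Bool)
    (m M0 ΔM : ℝ) (hΔM : 0 < ΔM) (hm : m < M0 - ΔM)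
    (θ : Fin d → ℝ) (hθ : ∀ j, θ j ∈ Set.Ioo (0 : ℝ) 1) (i : Fin d)
    (hprod : (∏ j ∈ Finset.univ.erase i, (if zstar j then θ j else 1 - θ j)) ≠ 0) :
    let dH : (Fin d → Bool) → (Fin d → Bool) → ℕ :=
      fun z z' => (Finset.univ.filter fun j => z j ≠ z' j).card
    let J : (Fin d → Bool) → ℝ :=
      fun z => if z = zstar then m else M0 - (dH z zstar : ℝ) * ΔM / d
    let P : (Fin d → ℝ) → (Fin d → Bool) → ℝ := fun t z => ∏ j, if z j then t j else 1 - t j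
    (-(deriv (fun t => ∑ z : Fin d → Bool, P (Function.update θ i t) z * J z) (θ i)))
        * deriv (fun t => P (Function.update θ i t) zstar) (θ i) ≥ 0
      ↔ m ≤ M0 - ΔM / (d * ∏ j ∈ Finset.univ.erase i, (if zstar j then θ j else 1 - θ j)) := by
  intro dH J P
  classical
  have hθpos : ∀ j, 0 < (if zstar j then θ j else 1 - θ j) := by
    intro j; rcases hθ j with ⟨h0, h1⟩; split <;> linarith
  set Q := ∏ j ∈ Finset.univ.erase i, (if zstar j then θ j else 1 - θ j) with hQ
  have hQpos : 0 < Q := Finset.prod_pos fun j _ => hθpos j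
  set C : (Fin d → Bool) → ℝ :=
    fun z => ∏ j ∈ Finset.univ.erase i, (if z j then θ j else 1 - θ j) with hC
  set σ : (Fin d → Bool) → ℝ := fun z => if z i then 1 else -1 with hσ
  have hCQ : C zstar = Q := rfl
  -- P as a linear function of t
  have hP : ∀ (z : Fin d → Bool) (t : ℝ),
      P (Function.update θ i t) z = (if z i then t else 1 - t) * C z := by
    intro z t
    show (∏ j, if z j then Function.update θ i t j else 1 - Function.update θ i t j) = _
    rw [← Finset.mul_prod_erase Finset.univ _ (Finset.mem_univ i)]
    congr 1
    · simp
    · exact Finset.prod_congr rfl fun j hj => by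
        rw [Function.update_of_ne (Finset.ne_of_mem_erase hj)]
  have hderiv : ∀ z : Fin d → Bool,
      HasDerivAt (fun t => P (Function.update θ i t) z) (σ z * C z) (θ i) := by
    intro z
    have heq : (fun t => P (Function.update θ i t) z)
        = fun t => (if z i then t else 1 - t) * C z := funext fun t => hP z t
    rw [heq]
    rcases hzi : z i with _ | _
    · simpa [hσ, hzi] using (((hasDerivAt_id (θ i)).const_sub 1).mul_const (C z))
    · simpa [hσ, hzi] using ((hasDerivAt_id (θ i)).mul_const (C z))
  -- generic sum-product swap
  have hsum : ∀ g : Fin d → Bool → ℝ,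
      ∑ z : Fin d → Bool, ∏ j, g j (z j) = ∏ j, (g j false + g j true) := by
    intro g
    rw [← Fintype.prod_sum g]
    exact Finset.prod_congr rfl fun j _ => by rw [Fintype.sum_bool]; ring
  have hfac : ∀ (g : Fin d → Bool → ℝ) (z : Fin d → Bool),
      (∏ j, g j (z j)) = g i (z i) * ∏ j ∈ Finset.univ.erase i, g j (z j) :=
    fun g z => (Finset.mul_prod_erase _ _ (Finset.mem_univ i)).symm
  -- base factor function
  set g1 : Fin d → Bool → ℝ :=
    fun j b => if j = i then (if b then 1 else -1) else if b then θ j else 1 - θ j with hg1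
  have e1 : ∀ z : Fin d → Bool, σ z * C z = ∏ j, g1 j (z j) := by
    intro z
    rw [hfac g1 z]
    congr 1
    · simp [hg1, hσ]
    · exact (Finset.prod_congr rfl fun j hj => by
        simp [hg1, Finset.ne_of_mem_erase hj]).symm
  have h1 : ∑ z : Fin d → Bool, σ z * C z = 0 := by
    rw [Finset.sum_congr rfl fun z _ => e1 z, hsum g1]
    exact Finset.prod_eq_zero (Finset.mem_univ i) (by simp [hg1])
  -- Hamming distance sum
  have hdH : ∀ z : Fin d → Bool, (dH z zstar : ℝ)
      = ∑ k, (if z k = zstar k then (0:ℝ) else 1) := by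
    intro z
    show (((Finset.univ.filter fun j => z j ≠ zstar j).card : ℕ) : ℝ) = _
    rw [Finset.card_filter]
    push_cast
    exact Finset.sum_congr rfl fun k _ => by by_cases h : z k = zstar k <;> simp [h]
  have h2 : ∑ z : Fin d → Bool, σ z * C z * (dH z zstar : ℝ) = -σ zstar := by
    simp_rw [hdH, Finset.mul_sum]
    rw [Finset.sum_comm]
    have step : ∀ k : Fin d,
        (∑ z : Fin d → Bool, σ z * C z * (if z k = zstar k then (0:ℝ) else 1))
          = if k = i then -σ zstar else 0 := by
      intro k
      set g2 : Fin d → Bool → ℝ :=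
        fun j b => g1 j b * (if j = k then (if b = zstar j then 0 else 1) else 1) with hg2
      have e2 : ∀ z : Fin d → Bool,
          σ z * C z * (if z k = zstar k then (0:ℝ) else 1) = ∏ j, g2 j (z j) := by
        intro z
        rw [hg2]
        rw [Finset.prod_mul_distrib, ← e1 z]
        congr 1
        rw [Finset.prod_ite_eq' Finset.univ k
          (fun j => if z j = zstar j then (0:ℝ) else 1)]
        simp
      rw [Finset.sum_congr rfl fun z _ => e2 z, hsum g2]
      by_cases hk : k = i
      · subst hk
        rw [← Finset.mul_prod_erase Finset.univ _ (Finset.mem_univ k)]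
        have hrest : (∏ j ∈ Finset.univ.erase k, (g2 j false + g2 j true)) = 1 := by
          apply Finset.prod_eq_one
          intro j hj
          have hji : j ≠ k := Finset.ne_of_mem_erase hj
          simp [hg2, hg1, hji]
        rw [hrest, if_pos rfl, mul_one]
        rcases hzk : zstar k with _ | _ <;> simp [hg2, hg1, hσ, hzk]
      · rw [if_neg hk]
        apply Finset.prod_eq_zero (Finset.mem_univ i)
        have : i ≠ k := fun h => hk h.symm
        simp [hg2, hg1, this]
    rw [Finset.sum_congr rfl fun k _ => step k, Finset.sum_ite_eq' Finset.univ i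
      (fun _ => -σ zstar), if_pos (Finset.mem_univ i)]
  have h3 : ∑ z : Fin d → Bool, σ z * C z * (if z = zstar then m - M0 else 0)
      = σ zstar * Q * (m - M0) := by
    simp_rw [mul_ite, mul_zero]
    rw [Finset.sum_ite_eq' Finset.univ zstar (fun z => σ z * C z * (m - M0)),
      if_pos (Finset.mem_univ zstar), hCQ]
  -- decompose J
  have hJ : ∀ z : Fin d → Bool, J z
      = (M0 - (dH z zstar : ℝ) * ΔM / d) + (if z = zstar then m - M0 else 0) := by
    intro z
    by_cases h : z = zstar
    · subst h
      have h0 : dH z z = 0 := by simp [dH]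
      simp [J, h0]
    · simp [J, h]
  have hD : ∑ z : Fin d → Bool, σ z * C z * J z
      = σ zstar * (ΔM / d + Q * (m - M0)) := by
    have expand : ∀ z : Fin d → Bool, σ z * C z * J z
        = M0 * (σ z * C z) - (ΔM / d) * (σ z * C z * (dH z zstar : ℝ))
          + σ z * C z * (if z = zstar then m - M0 else 0) := by
      intro z; rw [hJ z]; ring
    rw [Finset.sum_congr rfl fun z _ => expand z]
    rw [Finset.sum_add_distrib, Finset.sum_sub_distrib, ← Finset.mul_sum, ← Finset.mul_sum,
      h1, h2, h3]
    ring
  have hE : deriv (fun t => ∑ z : Fin d → Bool, P (Function.update θ i t) z * J z) (θ i)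
      = σ zstar * (ΔM / d + Q * (m - M0)) := by
    rw [← hD]
    exact (HasDerivAt.fun_sum fun z _ => (hderiv z).mul_const (J z)).deriv
  have hPz : deriv (fun t => P (Function.update θ i t) zstar) (θ i) = σ zstar * Q := by
    rw [← hCQ]; exact (hderiv zstar).deriv
  rw [hE, hPz]
  have hσsq : σ zstar * σ zstar = 1 := by
    simp only [hσ]; split <;> norm_num
  have hdpos : (0:ℝ) < d := by exact_mod_cast hd
  have hdQ : (0:ℝ) < (d:ℝ) * Q := mul_pos hdpos hQpos
  set R := ΔM / ((d:ℝ) * Q) with hR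
  have hRpos : 0 < R := div_pos hΔM hdQ
  have hXR : ΔM / d + Q * (m - M0) = Q * (R + m - M0) := by
    rw [hR]; field_simp; ring
  have hprodeq : -(σ zstar * (ΔM / d + Q * (m - M0))) * (σ zstar * Q)
      = -(Q * (R + m - M0) * Q) := by
    rw [hXR]
    calc -(σ zstar * (Q * (R + m - M0))) * (σ zstar * Q)
        = -((σ zstar * σ zstar) * (Q * (R + m - M0) * Q)) := by ring
      _ = -(Q * (R + m - M0) * Q) := by rw [hσsq]; ring
  rw [hprodeq]
  constructor
  · intro h
    have hQQ : 0 < Q * Q := mul_pos hQpos hQpos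
    nlinarith
  · intro h
    have hQQ : 0 < Q * Q := mul_pos hQpos hQpos
    nlinarith
end

section
/- In the setting of the unwanted generalization theorem, if max_i p_{θ_i}(z_i*) = 1−ε with ε ∈ (0,1), then the gradient alignment condition at every coordinate requires m ≤ M₀ − (ΔM/d)·(1/(1−ε))^{d−1}; in particular the required m diverges to −∞ at rate Θ(c^d/d) with c = 1/(1−ε) > 1 as d → ∞. -/
open Finset

lemma aux_hasDeriv {d : ℕ} (θ : Fin d → ℝ) (i : Fin d) (z : Fin d → Bool) (x : ℝ) :
    HasDerivAt (fun t => ∏ j, if z j then Function.update θ i t j else 1 - Function.update θ i t j)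
      ((if z i then 1 else -1) * ∏ j ∈ Finset.univ.erase i, (if z j then θ j else 1 - θ j)) x := by
  have hsplit : ∀ t : ℝ, (∏ j, if z j then Function.update θ i t j else 1 - Function.update θ i t j)
      = (if z i then t else 1 - t) * ∏ j ∈ Finset.univ.erase i, (if z j then θ j else 1 - θ j) := by
    intro t
    rw [← Finset.mul_prod_erase Finset.univ _ (Finset.mem_univ i)]
    simp only [Function.update_self]
    congr 1
    apply Finset.prod_congr rfl
    intro j hj
    rw [Function.update_of_ne (Finset.ne_of_mem_erase hj)]
  simp only [hsplit]
  cases hz : z i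
  · simpa using ((hasDerivAt_id x).const_sub 1).mul_const _
  · simpa using (hasDerivAt_id x).mul_const _

lemma sum_prod_bool {d : ℕ} (h : Fin d → Bool → ℝ) :
    ∑ z : Fin d → Bool, ∏ j, h j (z j) = ∏ j, (h j false + h j true) := by
  have := Finset.prod_univ_sum (fun _ : Fin d => (Finset.univ : Finset Bool)) (fun j b => h j b)
  rw [Fintype.piFinset_univ] at this
  rw [← this]
  exact Finset.prod_congr rfl fun j _ => by simp [Fintype.sum_bool, add_comm]

lemma bool_eq_not_of_ne {a b : Bool} (h : ¬ a = b) : a = !b := by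
  cases a <;> cases b <;> simp_all

set_option maxHeartbeats 1600000 in
/-- Corollary of the unwanted generalization theorem: if `max_i p_{θ_i}(z*_i) = 1 − ε` with
`ε ∈ (0,1)`, then gradient alignment at every coordinate requires
`m ≤ M₀ − (ΔM/d)·(1/(1−ε))^{d−1}`. -/
theorem unwanted_generalization_corollary (d : ℕ) (hd : 0 < d) (zstar : Fin d → Bool)
    (m M0 ΔM : ℝ) (hΔM : 0 < ΔM) (hm : m < M0 - ΔM)
    (θ : Fin d → ℝ) (hθ : ∀ j, θ j ∈ Set.Ioo (0 : ℝ) 1)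
    (ε : ℝ) (hε : ε ∈ Set.Ioo (0 : ℝ) 1)
    (hmax_le : ∀ j, (if zstar j then θ j else 1 - θ j) ≤ 1 - ε)
    (hmax_eq : ∃ j, (if zstar j then θ j else 1 - θ j) = 1 - ε) :
    let dH : (Fin d → Bool) → (Fin d → Bool) → ℕ :=
      fun z z' => (Finset.univ.filter fun j => z j ≠ z' j).card
    let J : (Fin d → Bool) → ℝ :=
      fun z => if z = zstar then m else M0 - (dH z zstar : ℝ) * ΔM / d
    let P : (Fin d → ℝ) → (Fin d → Bool) → ℝ := fun t z => ∏ j, if z j then t j else 1 - t j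
    (∀ i : Fin d,
        (-(deriv (fun t => ∑ z : Fin d → Bool, P (Function.update θ i t) z * J z) (θ i)))
          * deriv (fun t => P (Function.update θ i t) zstar) (θ i) ≥ 0)
      → m ≤ M0 - ΔM / d * (1 / (1 - ε)) ^ (d - 1) := by
  intro dH J P hgrad
  classical
  obtain ⟨hε0, hε1⟩ := hε
  have hdR : (0:ℝ) < d := by exact_mod_cast hd
  set i : Fin d := ⟨0, hd⟩ with hidef
  set C : (Fin d → Bool) → ℝ :=
    fun z => ∏ j ∈ Finset.univ.erase i, (if z j then θ j else 1 - θ j) with hCdef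
  have hfacpos : ∀ (z : Fin d → Bool) (j : Fin d), 0 < (if z j then θ j else 1 - θ j) := by
    intro z j
    cases z j
    · simpa using (hθ j).2
    · simpa using (hθ j).1
  have hCpos : ∀ z, 0 < C z := fun z => Finset.prod_pos fun j _ => hfacpos z j
  have hCupd : ∀ (z : Fin d → Bool) (b : Bool), C (Function.update z i b) = C z := by
    intro z b
    apply Finset.prod_congr rfl
    intro j hj
    rw [Function.update_of_ne (Finset.ne_of_mem_erase hj)]
  -- derivative of the expected objective
  have hD : deriv (fun t => ∑ z : Fin d → Bool, P (Function.update θ i t) z * J z) (θ i)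
      = ∑ z : Fin d → Bool, ((if z i then 1 else -1) * C z) * J z := by
    exact HasDerivAt.deriv (HasDerivAt.fun_sum fun z _ => (aux_hasDeriv θ i z (θ i)).mul_const (J z))
  have hPd : deriv (fun t => P (Function.update θ i t) zstar) (θ i)
      = (if zstar i then 1 else -1) * C zstar :=
    (aux_hasDeriv θ i zstar (θ i)).deriv
  have H := hgrad i
  rw [hD, hPd] at H
  -- pair each z with its flip at coordinate i
  set A : Finset (Fin d → Bool) := Finset.univ.filter (fun z => z i = zstar i) with hAdef
  set flipz : (Fin d → Bool) → (Fin d → Bool) :=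
    fun z => Function.update z i (!zstar i) with hflipdef
  have hzstarA : zstar ∈ A := by simp [hAdef]
  have hflip_i : ∀ z : Fin d → Bool, flipz z i = !zstar i := by
    intro z; simp [hflipdef]
  have hsum : ∑ z : Fin d → Bool, ((if z i then 1 else -1) * C z) * J z
      = (if zstar i then 1 else -1) * ∑ z ∈ A, C z * (J z - J (flipz z)) := by
    rw [← Finset.sum_filter_add_sum_filter_not Finset.univ (fun z => z i = zstar i)
      (fun z => ((if z i then 1 else -1) * C z) * J z)]
    have h2 : ∑ z ∈ Finset.univ.filter (fun z => ¬ z i = zstar i),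
        ((if z i then 1 else -1) * C z) * J z
        = ∑ z ∈ A, ((if (flipz z) i then 1 else -1) * C (flipz z)) * J (flipz z) := by
      apply Finset.sum_nbij' (i := fun z => Function.update z i (zstar i)) (j := flipz)
      · intro a ha
        simp [hAdef]
      · intro a ha
        rw [hAdef, Finset.mem_filter] at ha
        simp [hflipdef, Bool.not_ne_self]
      · intro a ha
        rw [Finset.mem_filter] at ha
        have hai : a i = !zstar i := bool_eq_not_of_ne ha.2
        simp only [hflipdef, Function.update_idem]
        rw [← hai, Function.update_eq_self]
      · intro a ha
        rw [hAdef, Finset.mem_filter] at ha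
        simp only [hflipdef, Function.update_idem]
        rw [← ha.2, Function.update_eq_self]
      · intro a ha
        rw [Finset.mem_filter] at ha
        have hai : a i = !zstar i := bool_eq_not_of_ne ha.2
        have : flipz (Function.update a i (zstar i)) = a := by
          simp only [hflipdef, Function.update_idem]
          rw [← hai, Function.update_eq_self]
        rw [this]
    rw [h2, ← Finset.sum_add_distrib, Finset.mul_sum]
    apply Finset.sum_congr rfl
    intro z hz
    rw [Finset.mem_filter] at hz
    rw [hflip_i z, hCupd, hz.2]
    cases zstar i <;> simp <;> ring
  have hflip_ne : ∀ z : Fin d → Bool, flipz z ≠ zstar := by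
    intro z hcontra
    have := congrFun hcontra i
    rw [hflip_i z] at this
    exact Bool.not_ne_self (zstar i) this
  have hA1 : ∑ z ∈ A, C z = 1 := by
    set h : Fin d → Bool → ℝ := fun j b =>
      if j = i then (if b = zstar i then 1 else 0) else (if b then θ j else 1 - θ j) with hhdef
    have e1 : ∑ z : Fin d → Bool, ∏ j, h j (z j) = ∑ z ∈ A, C z := by
      have hsp := Finset.sum_filter_add_sum_filter_not (Finset.univ : Finset (Fin d → Bool))
        (fun z => z i = zstar i) (fun z => ∏ j, h j (z j))
      rw [← hsp]
      have e2 : ∑ z ∈ Finset.univ.filter (fun z : Fin d → Bool => ¬ z i = zstar i),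
          ∏ j, h j (z j) = 0 := by
        apply Finset.sum_eq_zero
        intro z hz
        rw [Finset.mem_filter] at hz
        exact Finset.prod_eq_zero (Finset.mem_univ i) (by simp [hhdef, hz.2])
      rw [e2, add_zero]
      apply Finset.sum_congr (by rw [hAdef])
      intro z hz
      rw [hAdef, Finset.mem_filter] at hz
      rw [← Finset.mul_prod_erase Finset.univ _ (Finset.mem_univ i)]
      rw [show h i (z i) = 1 by simp [hhdef, hz.2], one_mul]
      apply Finset.prod_congr rfl
      intro j hj
      simp [hhdef, Finset.ne_of_mem_erase hj]
    rw [← e1, sum_prod_bool]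
    apply Finset.prod_eq_one
    intro j _
    rcases eq_or_ne j i with rfl | hne
    · cases hzi : zstar i <;> simp [hhdef, hzi]
    · simp [hhdef, hne]
  have hJ : ∀ z ∈ A, C z * (J z - J (flipz z))
      = C z * (ΔM / d) + (if z = zstar then C zstar * (m - M0) else 0) := by
    intro z hz
    rw [hAdef, Finset.mem_filter] at hz
    have hcard : dH (flipz z) zstar = dH z zstar + 1 := by
      show (Finset.univ.filter fun j => flipz z j ≠ zstar j).card
        = (Finset.univ.filter fun j => z j ≠ zstar j).card + 1
      have hset : (Finset.univ.filter fun j => flipz z j ≠ zstar j)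
          = insert i (Finset.univ.filter fun j => z j ≠ zstar j) := by
        ext j
        rcases eq_or_ne j i with rfl | hne
        · simp [hflipdef, Bool.not_ne_self]
        · simp [hflipdef, Function.update_of_ne hne, hne]
      rw [hset, Finset.card_insert_of_notMem (by simp [hz.2])]
    have hJflip : J (flipz z) = M0 - ((dH z zstar : ℝ) + 1) * ΔM / d := by
      show (if flipz z = zstar then m else M0 - (dH (flipz z) zstar : ℝ) * ΔM / d) = _
      rw [if_neg (hflip_ne z), hcard]
      push_cast
      ring
    by_cases hzz : z = zstar
    · subst hzz
      have hJz : J z = m := if_pos rfl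
      have hd0 : dH z z = 0 := by
        show (Finset.univ.filter fun j => z j ≠ z j).card = 0
        simp
      rw [hJflip, hJz, hd0, if_pos rfl]
      push_cast
      ring
    · have hJz : J z = M0 - (dH z zstar : ℝ) * ΔM / d := if_neg hzz
      rw [hJflip, hJz, if_neg hzz]
      push_cast
      ring
  have hT : ∑ z ∈ A, C z * (J z - J (flipz z)) = ΔM / d + C zstar * (m - M0) := by
    rw [Finset.sum_congr rfl hJ, Finset.sum_add_distrib, ← Finset.sum_mul, hA1,
      Finset.sum_ite_eq' A zstar, if_pos hzstarA]
    ring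
  -- extract T ≤ 0 from the alignment condition
  have hTle : ΔM / d + C zstar * (m - M0) ≤ 0 := by
    rw [hsum, hT] at H
    rcases hzi : zstar i with _ | _ <;> rw [hzi] at H <;> simp at H <;>
      nlinarith [hCpos zstar]
  -- bound C zstar
  have hCle : C zstar ≤ (1 - ε) ^ (d - 1) := by
    have hcard : (Finset.univ.erase i).card = d - 1 := by
      rw [Finset.card_erase_of_mem (Finset.mem_univ i), Finset.card_univ, Fintype.card_fin]
    calc C zstar ≤ ∏ j ∈ Finset.univ.erase i, (1 - ε) :=
          Finset.prod_le_prod (fun j _ => (hfacpos zstar j).le) (fun j _ => hmax_le j)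
      _ = (1 - ε) ^ (d - 1) := by rw [Finset.prod_const, hcard]
  have h1ε : (0:ℝ) < 1 - ε := by linarith
  have hpowpos : (0:ℝ) < (1 - ε) ^ (d - 1) := pow_pos h1ε _
  have hkey : ΔM / d * (1 / (1 - ε)) ^ (d - 1) ≤ ΔM / d * (1 / C zstar) := by
    have h1 : (1 / (1 - ε)) ^ (d - 1) = 1 / (1 - ε) ^ (d - 1) := by
      rw [div_pow, one_pow]
    rw [h1]
    exact mul_le_mul_of_nonneg_left (one_div_le_one_div_of_le (hCpos zstar) hCle)
      (div_nonneg hΔM.le hdR.le)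
  have hfinal : m ≤ M0 - ΔM / d * (1 / C zstar) := by
    have hc := hCpos zstar
    have h2 : ΔM / d * (1 / C zstar) ≤ M0 - m := by
      rw [mul_one_div]
      exact (div_le_iff₀ hc).mpr (by nlinarith)
    linarith
  linarith
end
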